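/- Let G ∈ ℝ^{N×N} be diagonalizable over ℂ with all eigenvalues in ℝ_{≥0}: there is an invertible P ∈ ℂ^{N×N} with P⁻¹GP diagonal with nonnegative real diagonal entries. Fix t₀ > 0. Then every trajectory q : [t₀, ∞) → ℝ^N of the NAGD game dynamics q''(t) + (3/t) q'(t) + G q(t) = 0 is bounded, q(t) converges to a limit q^∞, and q'(t) → 0 as t → ∞; moreover sup_{t ≥ t₀} ‖q(t)‖₂ ≤ κ(P)·(‖q(t₀)‖₂ + C‖q'(t₀)‖₂), where κ(P) = ‖P‖₂‖P⁻¹‖₂ is the condition number of P and C = max{t₀/2, λ_min^{-1/2}} with λ_min the smallest strictly positive eigenvalue of G (C = t₀/2 if G = 0). -/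

import Mathlib

open Filter

/-- The Euclidean norm `‖x‖₂` of a vector `x ∈ ℝ^N`. -/
noncomputable def e2norm {N : ℕ} (x : Fin N → ℝ) : ℝ := Real.sqrt (∑ i, x i ^ 2)

/-- The operator 2-norm `‖M‖₂` of a complex matrix, i.e. the operator norm of the induced
linear map between Euclidean spaces. -/
noncomputable def l2OpNorm {N : ℕ} (M : Matrix (Fin N) (Fin N) ℂ) : ℝ :=
  ‖LinearMap.toContinuousLinearMap (Matrix.toEuclideanLin M)‖

/-- The constant `C = max {t₀/2, λ_min^{-1/2}}`, where `λ_min` is the smallest strictly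
positive entry of `d` (the eigenvalues of `G`); `C = t₀/2` if there is none (`G = 0`). -/
noncomputable def Cconst {N : ℕ} (t₀ : ℝ) (d : Fin N → ℝ) : ℝ :=
  if h : ((Finset.univ.filter fun i => 0 < d i).image d).Nonempty then
    max (t₀ / 2) ((((Finset.univ.filter fun i => 0 < d i).image d).min' h) ^ (-(1 : ℝ) / 2))
  else t₀ / 2

/-- NAGD game dynamics: `q` is a twice continuously differentiable trajectory with
velocity `v = q'` satisfying `q'' + (3/t) q' + G q = 0` on `[t₀, ∞)`. -/
def IsNAGDTrajectory {N : ℕ} (G : Matrix (Fin N) (Fin N) ℝ) (t₀ : ℝ)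
    (q v : ℝ → Fin N → ℝ) : Prop :=
  (∀ t, t₀ ≤ t → HasDerivAt q (v t) t) ∧
  (∀ t, t₀ ≤ t → HasDerivAt v (-(3 / t) • v t - G.mulVec (q t)) t)

section Helpers
open Topology

lemma sqrt_add_le' {a b : ℝ} (ha : 0 ≤ a) (hb : 0 ≤ b) :
    Real.sqrt (a + b) ≤ Real.sqrt a + Real.sqrt b := by
  have h1 := Real.sq_sqrt ha
  have h2 := Real.sq_sqrt hb
  have h3 := Real.sqrt_nonneg a
  have h4 := Real.sqrt_nonneg b
  have h : a + b ≤ (Real.sqrt a + Real.sqrt b) ^ 2 := by nlinarith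
  calc Real.sqrt (a + b) ≤ Real.sqrt ((Real.sqrt a + Real.sqrt b) ^ 2) := Real.sqrt_le_sqrt h
    _ = Real.sqrt a + Real.sqrt b := Real.sqrt_sq (by positivity)

lemma antitone_aux {t₀ : ℝ} {F F' : ℝ → ℝ}
    (hF : ∀ t, t₀ ≤ t → HasDerivAt F (F' t) t)
    (hF' : ∀ t, t₀ < t → F' t ≤ 0) :
    ∀ t, t₀ ≤ t → F t ≤ F t₀ := by
  have h := antitoneOn_of_deriv_nonpos (convex_Ici t₀)
    (fun t ht => (hF t ht).continuousAt.continuousWithinAt)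
    (fun t ht => by
      rw [interior_Ici] at ht
      exact (hF t (le_of_lt ht)).differentiableAt.differentiableWithinAt)
    (fun t ht => by
      rw [interior_Ici] at ht
      rw [(hF t (le_of_lt ht)).deriv]
      exact hF' t ht)
  exact fun t ht => h Set.self_mem_Ici ht ht

lemma const_aux {t₀ : ℝ} {f : ℝ → ℝ}
    (hf : ∀ t, t₀ ≤ t → HasDerivAt f 0 t) :
    ∀ t, t₀ ≤ t → f t = f t₀ := by
  intro t ht
  exact constant_of_has_deriv_right_zero
    (fun s hs => (hf s hs.1).continuousAt.continuousWithinAt)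
    (fun s hs => (hf s hs.1).hasDerivWithinAt) t ⟨ht, le_refl t⟩

lemma minkowski_aux {ι : Type*} [Fintype ι] (x a b : ι → ℝ) (C : ℝ) (hC : 0 ≤ C)
    (h : ∀ i, x i ^ 2 ≤ (a i + C * b i) ^ 2) :
    Real.sqrt (∑ i, x i ^ 2) ≤ Real.sqrt (∑ i, a i ^ 2) + C * Real.sqrt (∑ i, b i ^ 2) := by
  classical
  let A : EuclideanSpace ℝ ι := (WithLp.equiv 2 (ι → ℝ)).symm a
  let B : EuclideanSpace ℝ ι := (WithLp.equiv 2 (ι → ℝ)).symm b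
  have hnorm : ∀ z : ι → ℝ, ‖((WithLp.equiv 2 (ι → ℝ)).symm z : EuclideanSpace ℝ ι)‖
      = Real.sqrt (∑ i, z i ^ 2) := by
    intro z
    rw [EuclideanSpace.norm_eq]
    congr 1
    refine Finset.sum_congr rfl fun i _ => ?_
    rw [Real.norm_eq_abs, sq_abs]
    rfl
  have key : Real.sqrt (∑ i, (a i + C * b i) ^ 2) ≤
      Real.sqrt (∑ i, a i ^ 2) + C * Real.sqrt (∑ i, b i ^ 2) := by
    have h1 : ((WithLp.equiv 2 (ι → ℝ)).symm (fun i => a i + C * b i) : EuclideanSpace ℝ ι)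
        = A + C • B := by
      ext i; simp [A, B]
    calc Real.sqrt (∑ i, (a i + C * b i) ^ 2)
        = ‖((WithLp.equiv 2 (ι → ℝ)).symm (fun i => a i + C * b i) : EuclideanSpace ℝ ι)‖ :=
          (hnorm _).symm
      _ = ‖A + C • B‖ := by rw [h1]
      _ ≤ ‖A‖ + ‖C • B‖ := norm_add_le _ _
      _ = ‖A‖ + C * ‖B‖ := by rw [norm_smul, Real.norm_eq_abs, abs_of_nonneg hC]
      _ = Real.sqrt (∑ i, a i ^ 2) + C * Real.sqrt (∑ i, b i ^ 2) := by
          rw [hnorm a, hnorm b]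
  refine le_trans (Real.sqrt_le_sqrt (Finset.sum_le_sum fun i _ => h i)) key

lemma hasDerivAt_creal {f : ℝ → ℂ} {f' : ℂ} {x : ℝ} (h : HasDerivAt f f' x) :
    HasDerivAt (fun t => (f t).re) f'.re x := by
  have := (Complex.reCLM.hasFDerivAt.comp x h.hasFDerivAt).hasDerivAt
  simp at this; exact this

lemma hasDerivAt_cimag {f : ℝ → ℂ} {f' : ℂ} {x : ℝ} (h : HasDerivAt f f' x) :
    HasDerivAt (fun t => (f t).im) f'.im x := by
  have := (Complex.imCLM.hasFDerivAt.comp x h.hasFDerivAt).hasDerivAt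
  simp at this; exact this
lemma l2norm_mulVec {N : ℕ} (M : Matrix (Fin N) (Fin N) ℂ) (x : Fin N → ℂ) :
    Real.sqrt (∑ i, ‖M.mulVec x i‖ ^ 2)
      ≤ l2OpNorm M * Real.sqrt (∑ i, ‖x i‖ ^ 2) := by
  have hnorm : ∀ z : Fin N → ℂ, ‖((WithLp.equiv 2 (Fin N → ℂ)).symm z : EuclideanSpace ℂ (Fin N))‖
      = Real.sqrt (∑ i, ‖z i‖ ^ 2) := by
    intro z
    rw [EuclideanSpace.norm_eq]
    congr 1
  have h := (LinearMap.toContinuousLinearMap (Matrix.toEuclideanLin M)).le_opNorm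
    ((WithLp.equiv 2 (Fin N → ℂ)).symm x)
  have happ : (LinearMap.toContinuousLinearMap (Matrix.toEuclideanLin M))
      ((WithLp.equiv 2 (Fin N → ℂ)).symm x)
      = (WithLp.equiv 2 (Fin N → ℂ)).symm (M.mulVec x) := by
    simp [LinearMap.coe_toContinuousLinearMap']
  rw [happ, hnorm, hnorm] at h
  exact h
lemma scalar_main (lam t₀ : ℝ) (hlam : 0 ≤ lam) (ht₀ : 0 < t₀)
    (u w : ℝ → ℝ)
    (hu : ∀ t, t₀ ≤ t → HasDerivAt u (w t) t)
    (hw : ∀ t, t₀ ≤ t → HasDerivAt w (-(3 / t) * w t - lam * u t) t)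
    (C : ℝ) (hC1 : t₀ / 2 ≤ C) (hC2 : 0 < lam → 1 ≤ Real.sqrt lam * C) :
    (∀ t, t₀ ≤ t → |u t| ≤ |u t₀| + C * |w t₀|) ∧
    (∃ L, Tendsto u atTop (nhds L)) ∧
    Tendsto w atTop (nhds 0) := by
  rcases eq_or_lt_of_le hlam with h0 | hpos
  · -- lam = 0 case
    set c : ℝ := w t₀ * t₀ ^ 3 with hc
    -- t^3 * w t is constant
    have hg : ∀ t, t₀ ≤ t → HasDerivAt (fun s => s ^ 3 * w s) 0 t := by
      intro t ht
      have htne : t ≠ 0 := (lt_of_lt_of_le ht₀ ht).ne'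
      have h := (hasDerivAt_pow 3 t).mul (hw t ht)
      refine h.congr_deriv ?_
      rw [← h0]
      field_simp
      ring
    have hgc := const_aux hg
    have hwt : ∀ t, t₀ ≤ t → w t = c / t ^ 3 := by
      intro t ht
      have htne : t ≠ 0 := (lt_of_lt_of_le ht₀ ht).ne'
      have := hgc t ht
      field_simp [hc]
      linarith [this]
    -- explicit solution for u
    set A : ℝ := u t₀ + c / 2 * (t₀ ^ 2)⁻¹ with hA
    set U : ℝ → ℝ := fun t => A + -(c / 2) * (t ^ 2)⁻¹ with hUdef
    have hU : ∀ t, t₀ ≤ t → HasDerivAt U (w t) t := by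
      intro t ht
      have htpos : 0 < t := lt_of_lt_of_le ht₀ ht
      have htne : t ≠ 0 := htpos.ne'
      have h2ne : t ^ 2 ≠ 0 := pow_ne_zero 2 htne
      have h := (((hasDerivAt_pow 2 t).inv h2ne).const_mul (-(c / 2))).const_add A
      refine h.congr_deriv ?_
      rw [hwt t ht]
      field_simp
      ring
    have hdiff : ∀ t, t₀ ≤ t → HasDerivAt (fun s => u s - U s) 0 t := by
      intro t ht
      have := (hu t ht).sub (hU t ht)
      simp at this; exact this
    have hUt₀ : U t₀ = u t₀ := by
      simp only [hUdef, hA]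
      ring
    have huU : ∀ t, t₀ ≤ t → u t = U t := by
      intro t ht
      have := const_aux hdiff t ht
      have h2 : u t - U t = u t₀ - U t₀ := by simpa using this
      rw [hUt₀] at h2
      linarith
    refine ⟨?_, ?_, ?_⟩
    · intro t ht
      have htpos : 0 < t := lt_of_lt_of_le ht₀ ht
      rw [huU t ht]
      have hD : 0 ≤ (t₀ ^ 2)⁻¹ - (t ^ 2)⁻¹ := by
        have : t₀ ^ 2 ≤ t ^ 2 := by nlinarith
        have h1 : (t ^ 2)⁻¹ ≤ (t₀ ^ 2)⁻¹ := by
          apply inv_anti₀ (by positivity) this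
        linarith
      have hD2 : (t₀ ^ 2)⁻¹ - (t ^ 2)⁻¹ ≤ (t₀ ^ 2)⁻¹ := by
        have : 0 ≤ (t ^ 2)⁻¹ := by positivity
        linarith
      have hUeq : U t = u t₀ + c / 2 * ((t₀ ^ 2)⁻¹ - (t ^ 2)⁻¹) := by
        simp [hUdef, hA]; ring
      rw [hUeq]
      have habs : |u t₀ + c / 2 * ((t₀ ^ 2)⁻¹ - (t ^ 2)⁻¹)|
          ≤ |u t₀| + |c / 2| * ((t₀ ^ 2)⁻¹ - (t ^ 2)⁻¹) := by
        calc |u t₀ + c / 2 * ((t₀ ^ 2)⁻¹ - (t ^ 2)⁻¹)|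
            ≤ |u t₀| + |c / 2 * ((t₀ ^ 2)⁻¹ - (t ^ 2)⁻¹)| := abs_add_le _ _
          _ = |u t₀| + |c / 2| * ((t₀ ^ 2)⁻¹ - (t ^ 2)⁻¹) := by
              rw [abs_mul, abs_of_nonneg hD]
      refine le_trans habs ?_
      have hcabs : |c / 2| = |w t₀| * t₀ ^ 3 / 2 := by
        rw [hc, abs_div, abs_mul, abs_of_nonneg (by positivity : (0:ℝ) ≤ t₀ ^ 3)]
        simp
      have : |c / 2| * ((t₀ ^ 2)⁻¹ - (t ^ 2)⁻¹) ≤ C * |w t₀| := by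
        calc |c / 2| * ((t₀ ^ 2)⁻¹ - (t ^ 2)⁻¹) ≤ |c / 2| * (t₀ ^ 2)⁻¹ := by
              apply mul_le_mul_of_nonneg_left hD2 (abs_nonneg _)
          _ = t₀ / 2 * |w t₀| := by
              rw [hcabs]; field_simp
          _ ≤ C * |w t₀| := mul_le_mul_of_nonneg_right hC1 (abs_nonneg _)
      linarith
    · refine ⟨A, ?_⟩
      have hUlim : Tendsto U atTop (nhds A) := by
        have h1 : Tendsto (fun t : ℝ => (t ^ 2)⁻¹) atTop (nhds 0) :=
          tendsto_inv_atTop_zero.comp (tendsto_pow_atTop two_ne_zero)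
        have h2 := (h1.const_mul (-(c / 2))).const_add A
        rw [show A = A + -(c / 2) * 0 by ring]
        exact h2
      exact hUlim.congr' (by
        filter_upwards [eventually_ge_atTop t₀] with t ht
        exact (huU t ht).symm)
    · have h1 : Tendsto (fun t : ℝ => c / t ^ 3) atTop (nhds 0) := by
        have h2 : Tendsto (fun t : ℝ => (t ^ 3)⁻¹) atTop (nhds 0) :=
          tendsto_inv_atTop_zero.comp (tendsto_pow_atTop three_ne_zero)
        have := h2.const_mul c
        simpa [div_eq_mul_inv] using this
      exact h1.congr' (by
        filter_upwards [eventually_ge_atTop t₀] with t ht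
        exact (hwt t ht).symm)
  · -- lam > 0 case
    -- energy F
    have hF : ∀ t, t₀ ≤ t → HasDerivAt (fun s => lam * u s ^ 2 + w s ^ 2)
        (-(6 / t) * w t ^ 2) t := by
      intro t ht
      have htne : t ≠ 0 := (lt_of_lt_of_le ht₀ ht).ne'
      have h := (((hu t ht).pow 2).const_mul lam).add ((hw t ht).pow 2)
      refine h.congr_deriv ?_
      field_simp
      ring
    have hFanti := antitone_aux hF (fun t ht => by
      have htpos : 0 < t := lt_trans ht₀ ht
      have : 0 ≤ 6 / t * w t ^ 2 := by positivity
      linarith)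
    -- energy E
    have hE : ∀ t, t₀ ≤ t → HasDerivAt (fun s => lam * s ^ 2 * u s ^ 2 + (2 * u s + s * w s) ^ 2)
        (-(2 * lam * t) * u t ^ 2) t := by
      intro t ht
      have htne : t ≠ 0 := (lt_of_lt_of_le ht₀ ht).ne'
      have hinner : HasDerivAt (fun s => 2 * u s + s * w s)
          (2 * w t + (1 * w t + t * (-(3 / t) * w t - lam * u t))) t :=
        ((hu t ht).const_mul 2).add ((hasDerivAt_id t).mul (hw t ht))
      have h := (((hasDerivAt_pow 2 t).const_mul lam).mul ((hu t ht).pow 2)).add (hinner.pow 2)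
      refine h.congr_deriv ?_
      simp only [Pi.pow_apply]
      field_simp
      ring
    have hEanti := antitone_aux hE (fun t ht => by
      have htpos : 0 < t := lt_trans ht₀ ht
      have : 0 ≤ 2 * lam * t * u t ^ 2 := by positivity
      linarith)
    have hE0 : 0 ≤ lam * t₀ ^ 2 * u t₀ ^ 2 + (2 * u t₀ + t₀ * w t₀) ^ 2 := by positivity
    set E₀ : ℝ := lam * t₀ ^ 2 * u t₀ ^ 2 + (2 * u t₀ + t₀ * w t₀) ^ 2 with hE₀
    set F₀ : ℝ := lam * u t₀ ^ 2 + w t₀ ^ 2 with hF₀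
    -- uniform bound on |u|
    have husq : ∀ t, t₀ ≤ t → u t ^ 2 ≤ u t₀ ^ 2 + w t₀ ^ 2 / lam := by
      intro t ht
      have h1 := hFanti t ht
      have hww : w t₀ ^ 2 / lam * lam = w t₀ ^ 2 := div_mul_cancel₀ _ hpos.ne'
      nlinarith [sq_nonneg (w t), h1]
    have hub : ∀ t, t₀ ≤ t → |u t| ≤ Real.sqrt (u t₀ ^ 2 + w t₀ ^ 2 / lam) := by
      intro t ht
      calc |u t| = Real.sqrt (u t ^ 2) := (Real.sqrt_sq_eq_abs _).symm
        _ ≤ Real.sqrt (u t₀ ^ 2 + w t₀ ^ 2 / lam) := Real.sqrt_le_sqrt (husq t ht)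
    refine ⟨?_, ?_, ?_⟩
    · intro t ht
      have hsq : 0 < Real.sqrt lam := Real.sqrt_pos.mpr hpos
      have hinv : (Real.sqrt lam)⁻¹ ≤ C := by
        have h := hC2 hpos
        calc (Real.sqrt lam)⁻¹ = (Real.sqrt lam)⁻¹ * 1 := (mul_one _).symm
          _ ≤ (Real.sqrt lam)⁻¹ * (Real.sqrt lam * C) :=
              mul_le_mul_of_nonneg_left h (by positivity)
          _ = C := by field_simp
      calc |u t| ≤ Real.sqrt (u t₀ ^ 2 + w t₀ ^ 2 / lam) := hub t ht
        _ ≤ Real.sqrt (u t₀ ^ 2) + Real.sqrt (w t₀ ^ 2 / lam) :=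
            sqrt_add_le' (sq_nonneg _) (by positivity)
        _ = |u t₀| + |w t₀| * (Real.sqrt lam)⁻¹ := by
            rw [Real.sqrt_sq_eq_abs, Real.sqrt_div (sq_nonneg _), Real.sqrt_sq_eq_abs,
              div_eq_mul_inv]
        _ ≤ |u t₀| + |w t₀| * C := by
            have := mul_le_mul_of_nonneg_left hinv (abs_nonneg (w t₀))
            linarith
        _ = |u t₀| + C * |w t₀| := by ring
    · -- u tends to 0
      refine ⟨0, ?_⟩
      set K : ℝ := Real.sqrt (E₀ / lam) with hK
      apply squeeze_zero_norm' (a := fun t => K * t⁻¹)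
      · filter_upwards [eventually_ge_atTop (max t₀ 1)] with t ht
        have ht1 : t₀ ≤ t := le_trans (le_max_left _ _) ht
        have htpos : 0 < t := lt_of_lt_of_le ht₀ ht1
        have h1 := hEanti t ht1
        have h2 : u t ^ 2 ≤ E₀ / (lam * t ^ 2) := by
          rw [le_div_iff₀ (by positivity)]
          nlinarith [sq_nonneg (2 * u t + t * w t), h1]
        rw [Real.norm_eq_abs]
        calc |u t| = Real.sqrt (u t ^ 2) := (Real.sqrt_sq_eq_abs _).symm
          _ ≤ Real.sqrt (E₀ / (lam * t ^ 2)) := Real.sqrt_le_sqrt h2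
          _ = K * t⁻¹ := by
              rw [show E₀ / (lam * t ^ 2) = E₀ / lam / t ^ 2 by rw [div_div],
                Real.sqrt_div (by positivity), Real.sqrt_sq htpos.le, div_eq_mul_inv]
      · have := tendsto_inv_atTop_zero.const_mul K
        simpa using this
    · -- w tends to 0
      set B : ℝ := Real.sqrt (u t₀ ^ 2 + w t₀ ^ 2 / lam) with hB
      set S : ℝ := Real.sqrt E₀ with hS
      apply squeeze_zero_norm' (a := fun t => (S + 2 * B) * t⁻¹)
      · filter_upwards [eventually_ge_atTop (max t₀ 1)] with t ht
        have ht1 : t₀ ≤ t := le_trans (le_max_left _ _) ht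
        have htpos : 0 < t := lt_of_lt_of_le ht₀ ht1
        have h1 := hEanti t ht1
        have h2 : (2 * u t + t * w t) ^ 2 ≤ E₀ := by
          nlinarith [h1, mul_nonneg (mul_nonneg hpos.le (sq_nonneg t)) (sq_nonneg (u t))]
        have h3 : |2 * u t + t * w t| ≤ S := by
          rw [hS]
          calc |2 * u t + t * w t| = Real.sqrt ((2 * u t + t * w t) ^ 2) :=
                (Real.sqrt_sq_eq_abs _).symm
            _ ≤ Real.sqrt E₀ := Real.sqrt_le_sqrt h2
        have h4 : |u t| ≤ B := hub t ht1
        have h5 : |t * w t| ≤ S + 2 * B := by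
          calc |t * w t| = |(2 * u t + t * w t) + -(2 * u t)| := by ring_nf
            _ ≤ |2 * u t + t * w t| + |(-(2 * u t))| := abs_add_le _ _
            _ ≤ S + 2 * B := by
                rw [abs_neg, abs_mul]
                simp only [abs_two]
                linarith
        rw [Real.norm_eq_abs]
        rw [abs_mul, abs_of_pos htpos] at h5
        rw [show (S + 2 * B) * t⁻¹ = (S + 2 * B) / t from (div_eq_mul_inv _ _).symm,
          le_div_iff₀ htpos]
        nlinarith [h5]
      · have := tendsto_inv_atTop_zero.const_mul (S + 2 * B)
        simpa using this

end Helpers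

/-- if `G` is diagonalizable over ℂ via an invertible `P` with nonnegative
real eigenvalues `d i`, then every NAGD trajectory is bounded, `q(t)` converges,
`q'(t) → 0`, and `sup_{t ≥ t₀} ‖q(t)‖₂ ≤ κ(P) (‖q(t₀)‖₂ + C ‖q'(t₀)‖₂)` where
`κ(P) = ‖P‖₂ ‖P⁻¹‖₂` and `C = max {t₀/2, λ_min^{-1/2}}`. -/
theorem stmt_15 {N : ℕ} (G : Matrix (Fin N) (Fin N) ℝ)
    (P : Matrix (Fin N) (Fin N) ℂ) (hP : IsUnit P)
    (d : Fin N → ℝ) (hd : ∀ i, 0 ≤ d i)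
    (hdiag : P⁻¹ * G.map Complex.ofReal * P = Matrix.diagonal fun i => (d i : ℂ))
    (t₀ : ℝ) (ht₀ : 0 < t₀)
    (q v : ℝ → Fin N → ℝ) (htraj : IsNAGDTrajectory G t₀ q v) :
    (∃ M : ℝ, ∀ t, t₀ ≤ t → e2norm (q t) ≤ M) ∧
    (∃ qinf : Fin N → ℝ, Tendsto q atTop (nhds qinf)) ∧
    Tendsto v atTop (nhds 0) ∧
    (∀ t, t₀ ≤ t → e2norm (q t) ≤
      (l2OpNorm P * l2OpNorm P⁻¹) * (e2norm (q t₀) + Cconst t₀ d * e2norm (v t₀))) := by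
  classical
  obtain ⟨hq, hv⟩ := htraj
  have hdet : IsUnit P.det := (Matrix.isUnit_iff_isUnit_det P).mp hP
  have hPPinv : P * P⁻¹ = 1 := Matrix.mul_nonsing_inv P hdet
  set Gc : Matrix (Fin N) (Fin N) ℂ := G.map Complex.ofReal with hGcdef
  have hPG : P⁻¹ * Gc = (Matrix.diagonal fun i => (d i : ℂ)) * P⁻¹ := by
    calc P⁻¹ * Gc = P⁻¹ * Gc * (P * P⁻¹) := by rw [hPPinv, Matrix.mul_one]
      _ = (P⁻¹ * Gc * P) * P⁻¹ := by rw [Matrix.mul_assoc (P⁻¹ * Gc)]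
      _ = (Matrix.diagonal fun i => (d i : ℂ)) * P⁻¹ := by rw [hdiag]
  set Qc : ℝ → Fin N → ℂ := fun t j => (q t j : ℂ) with hQcdef
  set Vc : ℝ → Fin N → ℂ := fun t j => (v t j : ℂ) with hVcdef
  set Y : ℝ → Fin N → ℂ := fun t => (P⁻¹).mulVec (Qc t) with hYdef
  set W : ℝ → Fin N → ℂ := fun t => (P⁻¹).mulVec (Vc t) with hWdef
  -- component derivatives of q, v
  have hq' : ∀ j t, t₀ ≤ t → HasDerivAt (fun s => q s j) (v t j) t :=
    fun j t ht => (hasDerivAt_pi.1 (hq t ht)) j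
  have hv' : ∀ j t, t₀ ≤ t → HasDerivAt (fun s => v s j)
      (-(3 / t) * v t j - G.mulVec (q t) j) t := by
    intro j t ht
    have := (hasDerivAt_pi.1 (hv t ht)) j
    simpa using this
  -- derivatives of Y and W components
  have hYd : ∀ i t, t₀ ≤ t → HasDerivAt (fun s => Y s i) (W t i) t := by
    intro i t ht
    have h : HasDerivAt (fun s => ∑ j, P⁻¹ i j * (q s j : ℂ))
        (∑ j, P⁻¹ i j * (v t j : ℂ)) t :=
      HasDerivAt.fun_sum fun j _ => ((hq' j t ht).ofReal_comp).const_mul (P⁻¹ i j)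
    exact h
  have hGq : ∀ t, (fun j => ((G.mulVec (q t)) j : ℂ)) = Gc.mulVec (Qc t) := by
    intro t
    funext j
    simp only [Matrix.mulVec, dotProduct, hGcdef, Matrix.map_apply, hQcdef]
    push_cast
    rfl
  have hDYv : ∀ t, (P⁻¹).mulVec (Gc.mulVec (Qc t)) = fun i => (d i : ℂ) * Y t i := by
    intro t
    rw [Matrix.mulVec_mulVec, hPG, ← Matrix.mulVec_mulVec]
    funext i
    rw [Matrix.mulVec_diagonal]
  have hWd : ∀ i t, t₀ ≤ t → HasDerivAt (fun s => W s i)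
      (((-(3 / t) : ℝ) : ℂ) * W t i - ((d i : ℝ) : ℂ) * Y t i) t := by
    intro i t ht
    have h : HasDerivAt (fun s => ∑ j, P⁻¹ i j * (v s j : ℂ))
        (∑ j, P⁻¹ i j * ((-(3 / t) * v t j - G.mulVec (q t) j : ℝ) : ℂ)) t :=
      HasDerivAt.fun_sum fun j _ => ((hv' j t ht).ofReal_comp).const_mul (P⁻¹ i j)
    refine h.congr_deriv ?_
    have e2 : ((d i : ℝ) : ℂ) * Y t i = ((P⁻¹).mulVec (Gc.mulVec (Qc t))) i := by
      rw [hDYv t]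
    rw [e2, ← hGq t]
    have e3 : W t i = ∑ j, P⁻¹ i j * (v t j : ℂ) := rfl
    have e4 : ((P⁻¹).mulVec fun j => ((G.mulVec (q t)) j : ℂ)) i
        = ∑ j, P⁻¹ i j * ((G.mulVec (q t)) j : ℂ) := rfl
    rw [e3, e4, Finset.mul_sum, ← Finset.sum_sub_distrib]
    refine Finset.sum_congr rfl fun j _ => ?_
    push_cast
    ring
  -- scalar component derivative facts (real and imaginary parts)
  have hure : ∀ i t, t₀ ≤ t → HasDerivAt (fun s => (Y s i).re) ((W t i).re) t :=
    fun i t ht => hasDerivAt_creal (hYd i t ht)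
  have huim : ∀ i t, t₀ ≤ t → HasDerivAt (fun s => (Y s i).im) ((W t i).im) t :=
    fun i t ht => hasDerivAt_cimag (hYd i t ht)
  have hwre : ∀ i t, t₀ ≤ t → HasDerivAt (fun s => (W s i).re)
      (-(3 / t) * (W t i).re - d i * (Y t i).re) t := by
    intro i t ht
    have h := hasDerivAt_creal (hWd i t ht)
    convert h using 1
    simp [Complex.sub_re, Complex.mul_re]
  have hwim : ∀ i t, t₀ ≤ t → HasDerivAt (fun s => (W s i).im)
      (-(3 / t) * (W t i).im - d i * (Y t i).im) t := by
    intro i t ht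
    have h := hasDerivAt_cimag (hWd i t ht)
    convert h using 1
    simp [Complex.sub_im, Complex.mul_im]
  -- properties of the constant C
  set C : ℝ := Cconst t₀ d with hCdef
  have hCc1 : t₀ / 2 ≤ C := by
    rw [hCdef, Cconst]
    split
    · exact le_max_left _ _
    · exact le_refl _
  have hC0 : 0 ≤ C := le_trans (by positivity) hCc1
  have hCc2 : ∀ i, 0 < d i → 1 ≤ Real.sqrt (d i) * C := by
    intro i hdi
    have hmem : d i ∈ (Finset.univ.filter fun i => 0 < d i).image d :=
      Finset.mem_image_of_mem d (Finset.mem_filter.mpr ⟨Finset.mem_univ i, hdi⟩)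
    have hne : ((Finset.univ.filter fun i => 0 < d i).image d).Nonempty := ⟨d i, hmem⟩
    rw [hCdef, Cconst, dif_pos hne]
    set m : ℝ := ((Finset.univ.filter fun i => 0 < d i).image d).min' hne with hm
    have hm_le : m ≤ d i := Finset.min'_le _ _ hmem
    have hm_pos : 0 < m := by
      obtain ⟨j, hj, hjm⟩ := Finset.mem_image.mp (Finset.min'_mem _ hne)
      rw [hm, ← hjm]
      exact (Finset.mem_filter.mp hj).2
    have hrpow : m ^ (-(1 : ℝ) / 2) = (Real.sqrt m)⁻¹ := by
      rw [show (-(1 : ℝ) / 2) = -(1 / 2 : ℝ) by ring, Real.rpow_neg hm_pos.le,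
        ← Real.sqrt_eq_rpow]
    have hsm : 0 < Real.sqrt m := Real.sqrt_pos.mpr hm_pos
    calc (1 : ℝ) = Real.sqrt m * (Real.sqrt m)⁻¹ := (mul_inv_cancel₀ hsm.ne').symm
      _ ≤ Real.sqrt (d i) * max (t₀ / 2) (m ^ (-(1 : ℝ) / 2)) := by
          have h2 : (Real.sqrt m)⁻¹ ≤ max (t₀ / 2) (m ^ (-(1 : ℝ) / 2)) := by
            rw [← hrpow]
            exact le_max_right _ _
          exact mul_le_mul (Real.sqrt_le_sqrt hm_le) h2 (by positivity) (Real.sqrt_nonneg _)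
  -- apply the scalar lemma to each component
  have main_re := fun i => scalar_main (d i) t₀ (hd i) ht₀ _ _ (hure i) (hwre i) C hCc1 (hCc2 i)
  have main_im := fun i => scalar_main (d i) t₀ (hd i) ht₀ _ _ (huim i) (hwim i) C hCc1 (hCc2 i)
  -- relation Qc = P ∘ Y, Vc = P ∘ W
  have hQY : ∀ s, Qc s = P.mulVec (Y s) := by
    intro s
    rw [hYdef]
    simp only [Matrix.mulVec_mulVec, hPPinv, Matrix.one_mulVec]
  have hVW : ∀ s, Vc s = P.mulVec (W s) := by
    intro s
    rw [hWdef]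
    simp only [Matrix.mulVec_mulVec, hPPinv, Matrix.one_mulVec]
  -- norms
  have eqQ : ∀ s : ℝ, e2norm (q s) = Real.sqrt (∑ j, ‖Qc s j‖ ^ 2) := by
    intro s
    rw [e2norm]
    congr 1
    refine Finset.sum_congr rfl fun j _ => ?_
    rw [hQcdef]
    simp [Complex.norm_real, sq_abs]
  have eqV : ∀ s : ℝ, e2norm (v s) = Real.sqrt (∑ j, ‖Vc s j‖ ^ 2) := by
    intro s
    rw [e2norm]
    congr 1
    refine Finset.sum_congr rfl fun j _ => ?_
    rw [hVcdef]
    simp [Complex.norm_real, sq_abs]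
  have sum_sq : ∀ z : Fin N → ℂ,
      ∑ p : Fin N × Bool, (if p.2 then (z p.1).im else (z p.1).re) ^ 2
        = ∑ i, ‖z i‖ ^ 2 := by
    intro z
    rw [Fintype.sum_prod_type]
    refine Finset.sum_congr rfl fun i _ => ?_
    rw [Fintype.sum_bool]
    simp only [Bool.false_eq_true, if_false, if_true, Complex.sq_norm, Complex.normSq_apply]
    ring
  -- the main sup bound
  have hbound : ∀ t, t₀ ≤ t → e2norm (q t) ≤
      (l2OpNorm P * l2OpNorm P⁻¹) * (e2norm (q t₀) + C * e2norm (v t₀)) := by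
    intro t ht
    have step2 : Real.sqrt (∑ i, ‖Y t i‖ ^ 2)
        ≤ Real.sqrt (∑ i, ‖Y t₀ i‖ ^ 2)
          + C * Real.sqrt (∑ i, ‖W t₀ i‖ ^ 2) := by
      have h := minkowski_aux (ι := Fin N × Bool)
        (fun p => if p.2 then (Y t p.1).im else (Y t p.1).re)
        (fun p => |if p.2 then (Y t₀ p.1).im else (Y t₀ p.1).re|)
        (fun p => |if p.2 then (W t₀ p.1).im else (W t₀ p.1).re|)
        C hC0 ?_
      · rw [sum_sq (Y t)] at h
        have e1 : ∑ p : Fin N × Bool, |if p.2 then (Y t₀ p.1).im else (Y t₀ p.1).re| ^ 2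
            = ∑ i, ‖Y t₀ i‖ ^ 2 := by
          rw [← sum_sq (Y t₀)]
          exact Finset.sum_congr rfl fun p _ => sq_abs _
        have e2 : ∑ p : Fin N × Bool, |if p.2 then (W t₀ p.1).im else (W t₀ p.1).re| ^ 2
            = ∑ i, ‖W t₀ i‖ ^ 2 := by
          rw [← sum_sq (W t₀)]
          exact Finset.sum_congr rfl fun p _ => sq_abs _
        rw [e1, e2] at h
        exact h
      · rintro ⟨i, b⟩
        have hb : |if b then (Y t i).im else (Y t i).re|
            ≤ |if b then (Y t₀ i).im else (Y t₀ i).re|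
              + C * |if b then (W t₀ i).im else (W t₀ i).re| := by
          cases b
          · simpa using (main_re i).1 t ht
          · simpa using (main_im i).1 t ht
        calc (if b then (Y t i).im else (Y t i).re) ^ 2
            = |if b then (Y t i).im else (Y t i).re| ^ 2 := (sq_abs _).symm
          _ ≤ (|if b then (Y t₀ i).im else (Y t₀ i).re|
              + C * |if b then (W t₀ i).im else (W t₀ i).re|) ^ 2 := by
              apply pow_le_pow_left₀ (abs_nonneg _) hb
    have step1 : Real.sqrt (∑ j, ‖Qc t j‖ ^ 2)
        ≤ l2OpNorm P * Real.sqrt (∑ i, ‖Y t i‖ ^ 2) := by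
      rw [hQY t]
      exact l2norm_mulVec P (Y t)
    have step3 : Real.sqrt (∑ i, ‖Y t₀ i‖ ^ 2)
        ≤ l2OpNorm P⁻¹ * Real.sqrt (∑ j, ‖Qc t₀ j‖ ^ 2) :=
      l2norm_mulVec P⁻¹ (Qc t₀)
    have step4 : Real.sqrt (∑ i, ‖W t₀ i‖ ^ 2)
        ≤ l2OpNorm P⁻¹ * Real.sqrt (∑ j, ‖Vc t₀ j‖ ^ 2) :=
      l2norm_mulVec P⁻¹ (Vc t₀)
    have hnP : 0 ≤ l2OpNorm P := norm_nonneg _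
    have hnPinv : 0 ≤ l2OpNorm P⁻¹ := norm_nonneg _
    rw [eqQ t, eqQ t₀, eqV t₀]
    calc Real.sqrt (∑ j, ‖Qc t j‖ ^ 2)
        ≤ l2OpNorm P * Real.sqrt (∑ i, ‖Y t i‖ ^ 2) := step1
      _ ≤ l2OpNorm P * (Real.sqrt (∑ i, ‖Y t₀ i‖ ^ 2)
            + C * Real.sqrt (∑ i, ‖W t₀ i‖ ^ 2)) :=
          mul_le_mul_of_nonneg_left step2 hnP
      _ ≤ l2OpNorm P * (l2OpNorm P⁻¹ * Real.sqrt (∑ j, ‖Qc t₀ j‖ ^ 2)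
            + C * (l2OpNorm P⁻¹ * Real.sqrt (∑ j, ‖Vc t₀ j‖ ^ 2))) := by
          apply mul_le_mul_of_nonneg_left _ hnP
          have := mul_le_mul_of_nonneg_left step4 hC0
          linarith [step3]
      _ = (l2OpNorm P * l2OpNorm P⁻¹) * (Real.sqrt (∑ j, ‖Qc t₀ j‖ ^ 2)
            + C * Real.sqrt (∑ j, ‖Vc t₀ j‖ ^ 2)) := by ring
  -- limits
  have hLre : ∀ i, ∃ L, Tendsto (fun t => (Y t i).re) atTop (nhds L) :=
    fun i => (main_re i).2.1
  have hLim : ∀ i, ∃ L, Tendsto (fun t => (Y t i).im) atTop (nhds L) :=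
    fun i => (main_im i).2.1
  choose Lre hLre' using hLre
  choose Lim hLim' using hLim
  set L : Fin N → ℂ := fun i => (Lre i : ℂ) + (Lim i : ℂ) * Complex.I with hLdef
  have hYlim : ∀ i, Tendsto (fun t => Y t i) atTop (nhds (L i)) := by
    intro i
    have hre := (Complex.continuous_ofReal.tendsto _).comp (hLre' i)
    have him := ((Complex.continuous_ofReal.tendsto _).comp (hLim' i)).mul_const Complex.I
    have h := hre.add him
    exact h.congr fun s => Complex.re_add_im _
  have hWlim : ∀ i, Tendsto (fun t => W t i) atTop (nhds 0) := by
    intro i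
    have hre := (Complex.continuous_ofReal.tendsto _).comp ((main_re i).2.2)
    have him := ((Complex.continuous_ofReal.tendsto _).comp ((main_im i).2.2)).mul_const Complex.I
    have h := hre.add him
    have h2 : Tendsto (fun t => W t i) atTop (nhds (((0 : ℝ) : ℂ) + ((0 : ℝ) : ℂ) * Complex.I)) :=
      h.congr fun s => Complex.re_add_im _
    simpa using h2
  -- convergence of q
  have hqconv : ∃ qinf : Fin N → ℝ, Tendsto q atTop (nhds qinf) := by
    refine ⟨fun j => (∑ i, P j i * L i).re, ?_⟩
    rw [tendsto_pi_nhds]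
    intro j
    have hsum : Tendsto (fun t => ∑ i, P j i * Y t i) atTop (nhds (∑ i, P j i * L i)) :=
      tendsto_finset_sum _ fun i _ => (hYlim i).const_mul (P j i)
    have hre := (Complex.continuous_re.tendsto _).comp hsum
    apply hre.congr'
    filter_upwards [eventually_ge_atTop t₀] with t ht
    have h1 : Qc t j = (P.mulVec (Y t)) j := congrFun (hQY t) j
    have h2 : (P.mulVec (Y t)) j = ∑ i, P j i * Y t i := rfl
    have : ((∑ i, P j i * Y t i).re) = q t j := by
      rw [← h2, ← h1, hQcdef]
      simp
    exact this
  -- convergence of v to 0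
  have hvconv : Tendsto v atTop (nhds 0) := by
    rw [tendsto_pi_nhds]
    intro j
    have hsum : Tendsto (fun t => ∑ i, P j i * W t i) atTop (nhds (∑ i, P j i * (0 : ℂ))) :=
      tendsto_finset_sum _ fun i _ => (hWlim i).const_mul (P j i)
    have hre := (Complex.continuous_re.tendsto _).comp hsum
    have h0 : ((∑ i, P j i * (0 : ℂ)).re) = 0 := by simp
    rw [h0] at hre
    have hre2 : Tendsto (fun t => (∑ i, P j i * W t i).re) atTop (nhds ((0 : Fin N → ℝ) j)) := by
      show Tendsto (fun t => (∑ i, P j i * W t i).re) atTop (nhds 0)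
      exact hre
    apply hre2.congr'
    filter_upwards [eventually_ge_atTop t₀] with t ht
    have h1 : Vc t j = (P.mulVec (W t)) j := congrFun (hVW t) j
    have h2 : (P.mulVec (W t)) j = ∑ i, P j i * W t i := rfl
    rw [← h2, ← h1, hVcdef]
    simp
  exact ⟨⟨(l2OpNorm P * l2OpNorm P⁻¹) * (e2norm (q t₀) + C * e2norm (v t₀)), hbound⟩,
    hqconv, hvconv, hbound⟩
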